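/- arXiv:2410.12767 — 4 statements merged into one kernel-verified Lean document; each statement's English description precedes it below -/
import Mathlib

section
/- Let Ω ⊆ ℝᵈ be an open connected set, and let ν₁, ω₁, ν₂, ω₂ : Ω → ℝ be C¹ functions such that ν₁² + ω₁² = ν₂² + ω₂² = 1 on Ω and ν₁∇ω₁ − ω₁∇ν₁ = ν₂∇ω₂ − ω₂∇ν₂ on Ω. Then there exists a constant φ ∈ ℝ such that ν₁(x) + iω₁(x) = (ν₂(x) + iω₂(x)) e^{iφ} for all x ∈ Ω. -/
noncomputable section

open Set

/-- Partial derivative (in direction `i`) of a real-valued function on `ℝᵈ`. -/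
def pdR (d : ℕ) (f : EuclideanSpace ℝ (Fin d) → ℝ) (i : Fin d)
    (x : EuclideanSpace ℝ (Fin d)) : ℝ :=
  fderiv ℝ f x (EuclideanSpace.single i 1)

/-- Laplacian of a real-valued function on `ℝᵈ`. -/
def lapR (d : ℕ) (f : EuclideanSpace ℝ (Fin d) → ℝ)
    (x : EuclideanSpace ℝ (Fin d)) : ℝ :=
  ∑ i, pdR d (pdR d f i) i x

/-- Partial derivative (in direction `i`) of a complex-valued function on `ℝᵈ`. -/
def pdC (d : ℕ) (f : EuclideanSpace ℝ (Fin d) → ℂ) (i : Fin d)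
    (x : EuclideanSpace ℝ (Fin d)) : ℂ :=
  fderiv ℝ f x (EuclideanSpace.single i 1)

/-- Laplacian of a complex-valued function on `ℝᵈ`. -/
def lapC (d : ℕ) (f : EuclideanSpace ℝ (Fin d) → ℂ)
    (x : EuclideanSpace ℝ (Fin d)) : ℂ :=
  ∑ i, pdC d (pdC d f i) i x

/-- A differentiable function with vanishing derivative on an open preconnected set
is constant there. -/
lemma const_on_of_fderiv_zero' {E F : Type*} [NormedAddCommGroup E] [NormedSpace ℝ E]
    [NormedAddCommGroup F] [NormedSpace ℝ F] {Ω : Set E} (hΩ : IsOpen Ω)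
    (hc : IsPreconnected Ω) {f : E → F} (hf : DifferentiableOn ℝ f Ω)
    (h' : ∀ x ∈ Ω, fderiv ℝ f x = 0) {x y : E} (hx : x ∈ Ω) (hy : y ∈ Ω) :
    f x = f y := by
  have hloc : ∀ z ∈ Ω, ∃ ε > 0, Metric.ball z ε ⊆ Ω ∧ ∀ w ∈ Metric.ball z ε, f w = f z := by
    intro z hz
    obtain ⟨ε, hε, hball⟩ := Metric.isOpen_iff.1 hΩ z hz
    refine ⟨ε, hε, hball, fun w hw => ?_⟩
    refine (convex_ball z ε).is_const_of_fderivWithin_eq_zero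
      (hf.mono hball) (fun u hu => ?_) hw (Metric.mem_ball_self hε)
    rw [fderivWithin_of_isOpen Metric.isOpen_ball hu]
    exact h' u (hball hu)
  by_contra hne
  set U : Set E := {z | z ∈ Ω ∧ f z = f x} with hU
  set V : Set E := {z | z ∈ Ω ∧ f z ≠ f x} with hV
  have hUo : IsOpen U := by
    rw [Metric.isOpen_iff]
    rintro z ⟨hz, hfz⟩
    obtain ⟨ε, hε, hb, hconst⟩ := hloc z hz
    exact ⟨ε, hε, fun w hw => ⟨hb hw, (hconst w hw).trans hfz⟩⟩
  have hVo : IsOpen V := by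
    rw [Metric.isOpen_iff]
    rintro z ⟨hz, hfz⟩
    obtain ⟨ε, hε, hb, hconst⟩ := hloc z hz
    exact ⟨ε, hε, fun w hw => ⟨hb hw, by rw [hconst w hw]; exact hfz⟩⟩
  have := hc U V hUo hVo (fun z hz => by
      by_cases h : f z = f x
      · exact Or.inl ⟨hz, h⟩
      · exact Or.inr ⟨hz, h⟩)
    ⟨x, hx, hx, rfl⟩ ⟨y, hy, hy, fun h => hne h.symm⟩
  obtain ⟨z, _, ⟨_, h1⟩, ⟨_, h2⟩⟩ := this
  exact h2 h1

lemma key_algebra' (a b c d a' b' c' d' : ℝ)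
    (e1 : a * a' + b * b' = 0) (e2 : c * c' + d * d' = 0)
    (e3 : a * b' - b * a' = c * d' - d * c')
    (e4 : a ^ 2 + b ^ 2 = 1) (e5 : c ^ 2 + d ^ 2 = 1) :
    (a * c' + b * d' + c * a' + d * b' = 0) ∧
      (b * c' - a * d' + c * b' - d * a' = 0) := by
  have ha' : a' = -b * (c * d' - d * c') := by linear_combination a * e1 - a' * e4 - b * e3
  have hb' : b' = a * (c * d' - d * c') := by linear_combination b * e1 - b' * e4 + a * e3
  have hc' : c' = -d * (c * d' - d * c') := by linear_combination c * e2 - c' * e5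
  have hd' : d' = c * (c * d' - d * c') := by linear_combination d * e2 - d' * e5
  constructor
  · linear_combination a * hc' + b * hd' + c * ha' + d * hb'
  · linear_combination b * hc' - a * hd' + c * hb' - d * ha'

theorem phase_shift_from_equal_phase_gradient
    (d : ℕ) (Ω : Set (EuclideanSpace ℝ (Fin d))) (hΩ : IsOpen Ω) (hΩc : IsConnected Ω)
    (ν₁ ω₁ ν₂ ω₂ : EuclideanSpace ℝ (Fin d) → ℝ)
    (hν₁ : ContDiffOn ℝ 1 ν₁ Ω) (hω₁ : ContDiffOn ℝ 1 ω₁ Ω)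
    (hν₂ : ContDiffOn ℝ 1 ν₂ Ω) (hω₂ : ContDiffOn ℝ 1 ω₂ Ω)
    (hn₁ : ∀ x ∈ Ω, (ν₁ x) ^ 2 + (ω₁ x) ^ 2 = 1)
    (hn₂ : ∀ x ∈ Ω, (ν₂ x) ^ 2 + (ω₂ x) ^ 2 = 1)
    (hgrad : ∀ x ∈ Ω, ∀ i : Fin d,
      ν₁ x * pdR d ω₁ i x - ω₁ x * pdR d ν₁ i x
        = ν₂ x * pdR d ω₂ i x - ω₂ x * pdR d ν₂ i x) :
    ∃ φ : ℝ, ∀ x ∈ Ω,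
      (ν₁ x : ℂ) + Complex.I * (ω₁ x : ℂ)
        = ((ν₂ x : ℂ) + Complex.I * (ω₂ x : ℂ)) * Complex.exp (Complex.I * (φ : ℂ)) := by
  classical
  set f : EuclideanSpace ℝ (Fin d) → ℂ := fun y =>
    ((ν₁ y : ℂ) + Complex.I * (ω₁ y : ℂ)) * ((ν₂ y : ℂ) - Complex.I * (ω₂ y : ℂ)) with hfdef
  -- differentiability facts
  have hdiff : ∀ x ∈ Ω, DifferentiableAt ℝ ν₁ x ∧ DifferentiableAt ℝ ω₁ x ∧
      DifferentiableAt ℝ ν₂ x ∧ DifferentiableAt ℝ ω₂ x := fun x hx =>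
    ⟨(hν₁.differentiableOn one_ne_zero).differentiableAt (hΩ.mem_nhds hx),
     (hω₁.differentiableOn one_ne_zero).differentiableAt (hΩ.mem_nhds hx),
     (hν₂.differentiableOn one_ne_zero).differentiableAt (hΩ.mem_nhds hx),
     (hω₂.differentiableOn one_ne_zero).differentiableAt (hΩ.mem_nhds hx)⟩
  -- the normalization gives `ν ν' + ω ω' = 0`
  have hnorm : ∀ (ν ω : EuclideanSpace ℝ (Fin d) → ℝ),
      ContDiffOn ℝ 1 ν Ω → ContDiffOn ℝ 1 ω Ω →
      (∀ x ∈ Ω, (ν x) ^ 2 + (ω x) ^ 2 = 1) →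
      ∀ x ∈ Ω, ∀ v, ν x * fderiv ℝ ν x v + ω x * fderiv ℝ ω x v = 0 := by
    intro ν ω hν hω hn x hx v
    have hd1 : DifferentiableAt ℝ ν x :=
      (hν.differentiableOn one_ne_zero).differentiableAt (hΩ.mem_nhds hx)
    have hd2 : DifferentiableAt ℝ ω x :=
      (hω.differentiableOn one_ne_zero).differentiableAt (hΩ.mem_nhds hx)
    have hs : HasFDerivAt (fun y => ν y * ν y + ω y * ω y)
        ((ν x • fderiv ℝ ν x + ν x • fderiv ℝ ν x) +
          (ω x • fderiv ℝ ω x + ω x • fderiv ℝ ω x)) x :=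
      (hd1.hasFDerivAt.mul hd1.hasFDerivAt).add (hd2.hasFDerivAt.mul hd2.hasFDerivAt)
    have hz : fderiv ℝ (fun y => ν y * ν y + ω y * ω y) x = 0 := by
      have he : (fun y => ν y * ν y + ω y * ω y) =ᶠ[nhds x] fun _ => (1 : ℝ) :=
        Filter.eventuallyEq_of_mem (hΩ.mem_nhds hx) (fun y hy => by
          have := hn y hy; nlinarith [this])
      rw [he.fderiv_eq, fderiv_fun_const]
      rfl
    have h2 := DFunLike.congr_fun (hs.fderiv.symm.trans hz) v
    simp only [ContinuousLinearMap.add_apply, ContinuousLinearMap.coe_smul',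
      Pi.smul_apply, smul_eq_mul, ContinuousLinearMap.zero_apply] at h2
    linarith
  -- f has vanishing derivative on Ω
  have hfderiv : ∀ x ∈ Ω, HasFDerivAt f
      ((((ν₁ x : ℂ) + Complex.I * (ω₁ x : ℂ)) •
          (Complex.ofRealCLM.comp (fderiv ℝ ν₂ x) -
            Complex.I • Complex.ofRealCLM.comp (fderiv ℝ ω₂ x))) +
        (((ν₂ x : ℂ) - Complex.I * (ω₂ x : ℂ)) •
          (Complex.ofRealCLM.comp (fderiv ℝ ν₁ x) +
            Complex.I • Complex.ofRealCLM.comp (fderiv ℝ ω₁ x)))) x := by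
    intro x hx
    obtain ⟨hd1, hd2, hd3, hd4⟩ := hdiff x hx
    have c1 := Complex.ofRealCLM.hasFDerivAt.comp x hd1.hasFDerivAt
    have c2 := Complex.ofRealCLM.hasFDerivAt.comp x hd2.hasFDerivAt
    have c3 := Complex.ofRealCLM.hasFDerivAt.comp x hd3.hasFDerivAt
    have c4 := Complex.ofRealCLM.hasFDerivAt.comp x hd4.hasFDerivAt
    exact (c1.add (c2.const_mul Complex.I)).mul (c3.sub (c4.const_mul Complex.I))
  have hfd : DifferentiableOn ℝ f Ω := fun x hx =>
    ((hfderiv x hx).differentiableAt).differentiableWithinAt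
  have hfzero : ∀ x ∈ Ω, fderiv ℝ f x = 0 := by
    intro x hx
    rw [(hfderiv x hx).fderiv]
    apply ContinuousLinearMap.coe_injective
    apply Module.Basis.ext (EuclideanSpace.basisFun (Fin d) ℝ).toBasis
    intro i
    have hba : (EuclideanSpace.basisFun (Fin d) ℝ).toBasis i = EuclideanSpace.single i 1 := by
      simp [OrthonormalBasis.coe_toBasis, EuclideanSpace.basisFun_apply]
    set v : EuclideanSpace ℝ (Fin d) := EuclideanSpace.single i 1 with hv
    have e1 := hnorm ν₁ ω₁ hν₁ hω₁ hn₁ x hx v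
    have e2 := hnorm ν₂ ω₂ hν₂ hω₂ hn₂ x hx v
    have e3 := hgrad x hx i
    unfold pdR at e3
    have key := key_algebra' (ν₁ x) (ω₁ x) (ν₂ x) (ω₂ x)
      (fderiv ℝ ν₁ x v) (fderiv ℝ ω₁ x v) (fderiv ℝ ν₂ x v) (fderiv ℝ ω₂ x v)
      e1 e2 (by linarith [e3]) (hn₁ x hx) (hn₂ x hx)
    obtain ⟨hre, him⟩ := key
    have hreC : ((ν₁ x : ℂ) * (fderiv ℝ ν₂ x v : ℂ) + (ω₁ x : ℂ) * (fderiv ℝ ω₂ x v : ℂ) +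
        (ν₂ x : ℂ) * (fderiv ℝ ν₁ x v : ℂ) + (ω₂ x : ℂ) * (fderiv ℝ ω₁ x v : ℂ)) = 0 := by
      exact_mod_cast congrArg (Complex.ofReal) hre
    have himC : ((ω₁ x : ℂ) * (fderiv ℝ ν₂ x v : ℂ) - (ν₁ x : ℂ) * (fderiv ℝ ω₂ x v : ℂ) +
        (ν₂ x : ℂ) * (fderiv ℝ ω₁ x v : ℂ) - (ω₂ x : ℂ) * (fderiv ℝ ν₁ x v : ℂ)) = 0 := by
      exact_mod_cast congrArg (Complex.ofReal) him
    rw [hba]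
    simp only [ContinuousLinearMap.coe_coe, ContinuousLinearMap.add_apply,
      ContinuousLinearMap.coe_smul', Pi.smul_apply, ContinuousLinearMap.sub_apply,
      ContinuousLinearMap.coe_comp', Function.comp_apply, Complex.ofRealCLM_apply,
      smul_eq_mul, ContinuousLinearMap.zero_apply, LinearMap.zero_apply]
    linear_combination hreC + Complex.I * himC
      - ((ω₁ x : ℂ) * ((fderiv ℝ ω₂ x) v : ℂ) + (ω₂ x : ℂ) * ((fderiv ℝ ω₁ x) v : ℂ)) * Complex.I_sq
  -- base point
  obtain ⟨x₀, hx₀⟩ := hΩc.nonempty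
  refine ⟨(f x₀).arg, fun x hx => ?_⟩
  -- |f x₀| = 1
  have habs : ‖f x₀‖ = 1 := by
    have h1 : ‖((ν₁ x₀ : ℂ) + Complex.I * (ω₁ x₀ : ℂ))‖ = 1 := by
      have hsq : ‖((ν₁ x₀ : ℂ) + Complex.I * (ω₁ x₀ : ℂ))‖ ^ 2 = 1 := by
        rw [Complex.sq_norm, Complex.normSq_apply]
        simp [Complex.add_re, Complex.add_im, Complex.mul_re, Complex.mul_im]
        have := hn₁ x₀ hx₀; nlinarith [this]
      nlinarith [norm_nonneg ((ν₁ x₀ : ℂ) + Complex.I * (ω₁ x₀ : ℂ)), hsq]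
    have h2 : ‖((ν₂ x₀ : ℂ) - Complex.I * (ω₂ x₀ : ℂ))‖ = 1 := by
      have hsq : ‖((ν₂ x₀ : ℂ) - Complex.I * (ω₂ x₀ : ℂ))‖ ^ 2 = 1 := by
        rw [Complex.sq_norm, Complex.normSq_apply]
        simp [Complex.sub_re, Complex.sub_im, Complex.mul_re, Complex.mul_im]
        have := hn₂ x₀ hx₀; nlinarith [this]
      nlinarith [norm_nonneg ((ν₂ x₀ : ℂ) - Complex.I * (ω₂ x₀ : ℂ)), hsq]
    rw [hfdef]
    simp only [norm_mul]
    rw [h1, h2, mul_one]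
  have hexp : Complex.exp (((f x₀).arg : ℂ) * Complex.I) = f x₀ := by
    conv_rhs => rw [← Complex.norm_mul_exp_arg_mul_I (f x₀)]
    rw [habs, Complex.ofReal_one, one_mul]
  -- constancy
  have hconst : f x = f x₀ :=
    const_on_of_fderiv_zero' hΩ hΩc.isPreconnected hfd hfzero hx hx₀
  have hfx : ((ν₁ x : ℂ) + Complex.I * (ω₁ x : ℂ)) * ((ν₂ x : ℂ) - Complex.I * (ω₂ x : ℂ))
      = Complex.exp (((f x₀).arg : ℂ) * Complex.I) := by
    rw [hexp]; exact hconst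
  have hB1 : ((ν₂ x : ℂ) + Complex.I * (ω₂ x : ℂ)) * ((ν₂ x : ℂ) - Complex.I * (ω₂ x : ℂ)) = 1 := by
    have h2C : ((ν₂ x : ℂ)) ^ 2 + ((ω₂ x : ℂ)) ^ 2 = 1 := by exact_mod_cast hn₂ x hx
    linear_combination h2C - ((ω₂ x : ℂ)) ^ 2 * Complex.I_sq
  rw [show Complex.I * ((f x₀).arg : ℂ) = ((f x₀).arg : ℂ) * Complex.I from mul_comm _ _]
  linear_combination ((ν₂ x : ℂ) + Complex.I * (ω₂ x : ℂ)) * hfx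
    - ((ν₁ x : ℂ) + Complex.I * (ω₁ x : ℂ)) * hB1
end
end

section
/- Let Ω ⊆ ℝᵈ be an open set, let κ, β : Ω → ℝ, let ε > 0, and suppose u : [0,ε) × Ω → ℂ is a C² solution of the Gross–Pitaevskii equation i ∂_z u + κ Δu + β|u|²u = 0 on (0,ε) × Ω. Suppose u is decomposed as u = ρ(v + iw), where ρ : [0,ε) × Ω → (0,∞) and v, w : [0,ε) × Ω → ℝ are C² and satisfy v² + w² = 1 (so that ρ = |u|). Then on (0,ε) × Ω one has ∂_z ρ = κ A(ρ,v,w), ∂_z v = κ B(ρ,v,w) − β ρ² w, and ∂_z w = κ C(ρ,v,w) + β ρ² v. -/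
noncomputable section

open Set

/-- `A(ρ,v,w) := ρ(wΔv − vΔw) + 2∇ρ·(w∇v − v∇w)`. -/
def Afun (d : ℕ) (ρ v w : EuclideanSpace ℝ (Fin d) → ℝ)
    (x : EuclideanSpace ℝ (Fin d)) : ℝ :=
  ρ x * (w x * lapR d v x - v x * lapR d w x)
    + 2 * ∑ i, pdR d ρ i x * (w x * pdR d v i x - v x * pdR d w i x)

/-- `B(ρ,v,w) := −w[Δρ/ρ + wΔw + vΔv]`. -/
def Bfun (d : ℕ) (ρ v w : EuclideanSpace ℝ (Fin d) → ℝ)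
    (x : EuclideanSpace ℝ (Fin d)) : ℝ :=
  -(w x) * (lapR d ρ x / ρ x + (w x * lapR d w x + v x * lapR d v x))

/-- `C(ρ,v,w) := v[Δρ/ρ + wΔw + vΔv]`. -/
def Cfun (d : ℕ) (ρ v w : EuclideanSpace ℝ (Fin d) → ℝ)
    (x : EuclideanSpace ℝ (Fin d)) : ℝ :=
  v x * (lapR d ρ x / ρ x + (w x * lapR d w x + v x * lapR d v x))

section helpers

variable {d : ℕ}

lemma pdR_congr {f g : EuclideanSpace ℝ (Fin d) → ℝ} {x : EuclideanSpace ℝ (Fin d)}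
    (h : f =ᶠ[nhds x] g) (i : Fin d) : pdR d f i x = pdR d g i x := by
  unfold pdR; rw [h.fderiv_eq]

lemma pdC_congr {f g : EuclideanSpace ℝ (Fin d) → ℂ} {x : EuclideanSpace ℝ (Fin d)}
    (h : f =ᶠ[nhds x] g) (i : Fin d) : pdC d f i x = pdC d g i x := by
  unfold pdC; rw [h.fderiv_eq]

lemma pdR_mul {f g : EuclideanSpace ℝ (Fin d) → ℝ} {x : EuclideanSpace ℝ (Fin d)}
    (hf : DifferentiableAt ℝ f x) (hg : DifferentiableAt ℝ g x) (i : Fin d) :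
    pdR d (fun y => f y * g y) i x = pdR d f i x * g x + f x * pdR d g i x := by
  unfold pdR
  rw [fderiv_fun_mul hf hg]
  simp [smul_eq_mul]
  ring

lemma pdR_add {f g : EuclideanSpace ℝ (Fin d) → ℝ} {x : EuclideanSpace ℝ (Fin d)}
    (hf : DifferentiableAt ℝ f x) (hg : DifferentiableAt ℝ g x) (i : Fin d) :
    pdR d (fun y => f y + g y) i x = pdR d f i x + pdR d g i x := by
  unfold pdR
  rw [fderiv_fun_add hf hg]
  simp

lemma contDiffAt_pd {f : EuclideanSpace ℝ (Fin d) → ℝ} {x : EuclideanSpace ℝ (Fin d)}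
    (hf : ContDiffAt ℝ 2 f x) (i : Fin d) :
    ContDiffAt ℝ 1 (pdR d f i) x := by
  have h1 : ContDiffAt ℝ 1 (fderiv ℝ f) x := hf.fderiv_right (by norm_num)
  exact ((ContinuousLinearMap.apply ℝ ℝ (EuclideanSpace.single i 1)).contDiff.contDiffAt).comp x h1

lemma lapR_mul {f g : EuclideanSpace ℝ (Fin d) → ℝ} {s : Set (EuclideanSpace ℝ (Fin d))}
    (hs : IsOpen s) {x : EuclideanSpace ℝ (Fin d)} (hx : x ∈ s)
    (hf : ∀ y ∈ s, ContDiffAt ℝ 2 f y) (hg : ∀ y ∈ s, ContDiffAt ℝ 2 g y) :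
    lapR d (fun y => f y * g y) x =
      lapR d f x * g x + 2 * ∑ i, pdR d f i x * pdR d g i x + f x * lapR d g x := by
  unfold lapR
  have key : ∀ i : Fin d, pdR d (pdR d (fun y => f y * g y) i) i x
      = (pdR d (pdR d f i) i x * g x + pdR d f i x * pdR d g i x)
        + (pdR d f i x * pdR d g i x + f x * pdR d (pdR d g i) i x) := by
    intro i
    have hEq : (pdR d (fun y => f y * g y) i) =ᶠ[nhds x]
        fun y => pdR d f i y * g y + f y * pdR d g i y :=
      Filter.eventuallyEq_of_mem (hs.mem_nhds hx) fun y hy =>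
        pdR_mul ((hf y hy).differentiableAt (by norm_num))
          ((hg y hy).differentiableAt (by norm_num)) i
    have hdf : DifferentiableAt ℝ (pdR d f i) x :=
      (contDiffAt_pd (hf x hx) i).differentiableAt one_ne_zero
    have hdg : DifferentiableAt ℝ (pdR d g i) x :=
      (contDiffAt_pd (hg x hx) i).differentiableAt one_ne_zero
    have hfd : DifferentiableAt ℝ f x := (hf x hx).differentiableAt (by norm_num)
    have hgd : DifferentiableAt ℝ g x := (hg x hx).differentiableAt (by norm_num)
    rw [pdR_congr hEq, pdR_add (hdf.fun_mul hgd) (hfd.fun_mul hdg), pdR_mul hdf hgd, pdR_mul hfd hdg]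
  simp only [key]
  rw [Finset.sum_add_distrib, Finset.sum_add_distrib, Finset.sum_add_distrib,
    ← Finset.sum_mul, ← Finset.mul_sum]
  ring

lemma pdC_split {f g : EuclideanSpace ℝ (Fin d) → ℝ} {x : EuclideanSpace ℝ (Fin d)}
    (hf : DifferentiableAt ℝ f x) (hg : DifferentiableAt ℝ g x) (i : Fin d) :
    pdC d (fun y => (f y : ℂ) + Complex.I * g y) i x
      = (pdR d f i x : ℂ) + Complex.I * pdR d g i x := by
  have h1 : HasFDerivAt (fun y : EuclideanSpace ℝ (Fin d) => ((f y : ℝ) : ℂ))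
      (Complex.ofRealCLM.comp (fderiv ℝ f x)) x :=
    Complex.ofRealCLM.hasFDerivAt.comp x hf.hasFDerivAt
  have h2 : HasFDerivAt (fun y : EuclideanSpace ℝ (Fin d) => ((g y : ℝ) : ℂ))
      (Complex.ofRealCLM.comp (fderiv ℝ g x)) x :=
    Complex.ofRealCLM.hasFDerivAt.comp x hg.hasFDerivAt
  have h3 : HasFDerivAt (fun y : EuclideanSpace ℝ (Fin d) => (f y : ℂ) + Complex.I * g y)
      (Complex.ofRealCLM.comp (fderiv ℝ f x)
        + Complex.I • Complex.ofRealCLM.comp (fderiv ℝ g x)) x := by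
    simpa [smul_eq_mul] using h1.fun_add (h2.fun_const_smul Complex.I)
  unfold pdC pdR
  rw [h3.fderiv]
  simp [smul_eq_mul]

lemma lapC_congr {F G : EuclideanSpace ℝ (Fin d) → ℂ} {s : Set (EuclideanSpace ℝ (Fin d))}
    (hs : IsOpen s) {x : EuclideanSpace ℝ (Fin d)} (hx : x ∈ s)
    (h : ∀ y ∈ s, F y = G y) : lapC d F x = lapC d G x := by
  unfold lapC
  refine Finset.sum_congr rfl fun i _ => ?_
  have hEq : pdC d F i =ᶠ[nhds x] pdC d G i :=
    Filter.eventuallyEq_of_mem (hs.mem_nhds hx) fun y hy =>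
      pdC_congr (Filter.eventuallyEq_of_mem (hs.mem_nhds hy) fun y' hy' => h y' hy') i
  exact pdC_congr hEq i

lemma lapC_split {f g : EuclideanSpace ℝ (Fin d) → ℝ} {s : Set (EuclideanSpace ℝ (Fin d))}
    (hs : IsOpen s) {x : EuclideanSpace ℝ (Fin d)} (hx : x ∈ s)
    (hf : ∀ y ∈ s, ContDiffAt ℝ 2 f y) (hg : ∀ y ∈ s, ContDiffAt ℝ 2 g y) :
    lapC d (fun y => (f y : ℂ) + Complex.I * g y) x
      = (lapR d f x : ℂ) + Complex.I * lapR d g x := by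
  unfold lapC lapR
  have key : ∀ i : Fin d, pdC d (pdC d (fun y => (f y : ℂ) + Complex.I * g y) i) i x
      = (pdR d (pdR d f i) i x : ℂ) + Complex.I * pdR d (pdR d g i) i x := by
    intro i
    have hEq : pdC d (fun y => (f y : ℂ) + Complex.I * g y) i =ᶠ[nhds x]
        fun y => (pdR d f i y : ℂ) + Complex.I * pdR d g i y :=
      Filter.eventuallyEq_of_mem (hs.mem_nhds hx) fun y hy =>
        pdC_split ((hf y hy).differentiableAt (by norm_num))
          ((hg y hy).differentiableAt (by norm_num)) i
    rw [pdC_congr hEq,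
      pdC_split ((contDiffAt_pd (hf x hx) i).differentiableAt one_ne_zero)
        ((contDiffAt_pd (hg x hx) i).differentiableAt one_ne_zero) i]
  simp only [key]
  rw [Finset.sum_add_distrib, ← Finset.mul_sum]
  push_cast
  ring

end helpers

theorem GP_polar_evolution
    (d : ℕ) (Ω : Set (EuclideanSpace ℝ (Fin d))) (hΩ : IsOpen Ω)
    (κ β : EuclideanSpace ℝ (Fin d) → ℝ) (ε : ℝ) (hε : 0 < ε)
    (u : ℝ → EuclideanSpace ℝ (Fin d) → ℂ) (ρ v w : ℝ → EuclideanSpace ℝ (Fin d) → ℝ)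
    (hu : ContDiffOn ℝ 2 (fun p : ℝ × EuclideanSpace ℝ (Fin d) => u p.1 p.2) (Ico 0 ε ×ˢ Ω))
    (hρC2 : ContDiffOn ℝ 2 (fun p : ℝ × EuclideanSpace ℝ (Fin d) => ρ p.1 p.2) (Ico 0 ε ×ˢ Ω))
    (hvC2 : ContDiffOn ℝ 2 (fun p : ℝ × EuclideanSpace ℝ (Fin d) => v p.1 p.2) (Ico 0 ε ×ˢ Ω))
    (hwC2 : ContDiffOn ℝ 2 (fun p : ℝ × EuclideanSpace ℝ (Fin d) => w p.1 p.2) (Ico 0 ε ×ˢ Ω))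
    (hpde : ∀ z ∈ Ioo (0 : ℝ) ε, ∀ x ∈ Ω,
      Complex.I * deriv (fun t => u t x) z + (κ x : ℂ) * lapC d (u z) x
        + (β x : ℂ) * ((‖u z x‖ : ℂ)) ^ 2 * u z x = 0)
    (hρpos : ∀ z ∈ Ico (0 : ℝ) ε, ∀ x ∈ Ω, 0 < ρ z x)
    (hvw : ∀ z ∈ Ico (0 : ℝ) ε, ∀ x ∈ Ω, (v z x) ^ 2 + (w z x) ^ 2 = 1)
    (hdecomp : ∀ z ∈ Ico (0 : ℝ) ε, ∀ x ∈ Ω,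
      u z x = (ρ z x : ℂ) * ((v z x : ℂ) + Complex.I * (w z x : ℂ))) :
    ∀ z ∈ Ioo (0 : ℝ) ε, ∀ x ∈ Ω,
      deriv (fun t => ρ t x) z = κ x * Afun d (ρ z) (v z) (w z) x ∧
      deriv (fun t => v t x) z = κ x * Bfun d (ρ z) (v z) (w z) x - β x * (ρ z x) ^ 2 * w z x ∧
      deriv (fun t => w t x) z = κ x * Cfun d (ρ z) (v z) (w z) x + β x * (ρ z x) ^ 2 * v z x := by
  intro z hz x hx
  have hzI : z ∈ Ico (0:ℝ) ε := Ioo_subset_Ico_self hz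
  have hmem : ∀ y ∈ Ω, (Ico (0:ℝ) ε ×ˢ Ω) ∈ nhds (z, y) := fun y hy =>
    mem_nhds_iff.mpr ⟨Ioo 0 ε ×ˢ Ω, Set.prod_mono Ioo_subset_Ico_self (subset_refl _),
      isOpen_Ioo.prod hΩ, ⟨hz, hy⟩⟩
  have hspace : ∀ (F : ℝ → EuclideanSpace ℝ (Fin d) → ℝ),
      ContDiffOn ℝ 2 (fun p : ℝ × EuclideanSpace ℝ (Fin d) => F p.1 p.2) (Ico 0 ε ×ˢ Ω) →
      ∀ y ∈ Ω, ContDiffAt ℝ 2 (F z) y := by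
    intro F hF y hy
    have h := ContDiffAt.comp (g := fun p : ℝ × EuclideanSpace ℝ (Fin d) => F p.1 p.2)
      (f := fun y' => (z, y')) y (hF.contDiffAt (hmem y hy))
      (contDiffAt_const.prodMk contDiffAt_id)
    exact h
  have htime : ∀ (F : ℝ → EuclideanSpace ℝ (Fin d) → ℝ),
      ContDiffOn ℝ 2 (fun p : ℝ × EuclideanSpace ℝ (Fin d) => F p.1 p.2) (Ico 0 ε ×ˢ Ω) →
      DifferentiableAt ℝ (fun t => F t x) z := by
    intro F hF
    exact ((hF.contDiffAt (hmem x hx)).differentiableAt (by norm_num)).comp z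
      (differentiableAt_id.prodMk (differentiableAt_const x) :
        DifferentiableAt ℝ (fun t : ℝ => (t, x)) z)
  have hρx := hspace ρ hρC2
  have hvx := hspace v hvC2
  have hwx := hspace w hwC2
  have hρt : HasDerivAt (fun t => ρ t x) (deriv (fun t => ρ t x) z) z :=
    (htime ρ hρC2).hasDerivAt
  have hvt : HasDerivAt (fun t => v t x) (deriv (fun t => v t x) z) z :=
    (htime v hvC2).hasDerivAt
  have hwt : HasDerivAt (fun t => w t x) (deriv (fun t => w t x) z) z :=
    (htime w hwC2).hasDerivAt
  -- time derivative of u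
  have hut : HasDerivAt (fun t => u t x)
      (((deriv (fun t => ρ t x) z : ℝ) : ℂ) * ((v z x : ℂ) + Complex.I * (w z x : ℂ))
        + (ρ z x : ℂ) * (((deriv (fun t => v t x) z : ℝ) : ℂ)
            + Complex.I * ((deriv (fun t => w t x) z : ℝ) : ℂ))) z := by
    have h2 : HasDerivAt (fun t => ((v t x : ℂ) + Complex.I * (w t x : ℂ)))
        (((deriv (fun t => v t x) z : ℝ) : ℂ) + Complex.I * ((deriv (fun t => w t x) z : ℝ) : ℂ)) z :=
      (hvt.ofReal_comp).add ((hwt.ofReal_comp).const_mul Complex.I)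
    have h3 := (hρt.ofReal_comp).mul h2
    refine HasDerivAt.congr_of_eventuallyEq h3 ?_
    exact Filter.eventuallyEq_of_mem (isOpen_Ioo.mem_nhds hz) fun t ht =>
      hdecomp t (Ioo_subset_Ico_self ht) x hx
  -- |u|^2
  have habs : ((‖u z x‖ : ℂ)) ^ 2 = ((ρ z x ^ 2 : ℝ) : ℂ) := by
    have h1 : (‖u z x‖) ^ 2 = (ρ z x) ^ 2 := by
      rw [Complex.sq_norm, hdecomp z hzI x hx, Complex.normSq_apply]
      have h := hvw z hzI x hx
      simp only [Complex.add_re, Complex.add_im, Complex.mul_re, Complex.mul_im,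
        Complex.I_re, Complex.I_im, Complex.ofReal_re, Complex.ofReal_im]
      nlinarith [h]
    push_cast [← h1]
    ring
  -- Laplacian of u
  have hlapC : lapC d (u z) x
      = ((lapR d (fun y => ρ z y * v z y) x : ℝ) : ℂ)
        + Complex.I * ((lapR d (fun y => ρ z y * w z y) x : ℝ) : ℂ) := by
    rw [lapC_congr hΩ hx (F := u z)
      (G := fun y => ((ρ z y * v z y : ℝ) : ℂ) + Complex.I * ((ρ z y * w z y : ℝ) : ℂ))
      (fun y hy => by rw [hdecomp z hzI y hy]; push_cast; ring)]
    exact lapC_split hΩ hx (fun y hy => (hρx y hy).mul (hvx y hy))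
      (fun y hy => (hρx y hy).mul (hwx y hy))
  have hLP := lapR_mul (f := ρ z) (g := v z) hΩ hx hρx hvx
  have hLQ := lapR_mul (f := ρ z) (g := w z) hΩ hx hρx hwx
  -- spatial constraint
  have hconst : ∀ i : Fin d, v z x * pdR d (v z) i x + w z x * pdR d (w z) i x = 0 := by
    intro i
    have hdv : DifferentiableAt ℝ (v z) x := (hvx x hx).differentiableAt (by norm_num)
    have hdw : DifferentiableAt ℝ (w z) x := (hwx x hx).differentiableAt (by norm_num)
    have h1 : pdR d (fun y => v z y * v z y + w z y * w z y) i x = 0 := by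
      have hq : (fun y => v z y * v z y + w z y * w z y) =ᶠ[nhds x] (fun _ => (1:ℝ)) :=
        Filter.eventuallyEq_of_mem (hΩ.mem_nhds hx) fun y hy => by
          have := hvw z hzI y hy; nlinarith [this]
      rw [pdR_congr hq]
      unfold pdR
      simp
    rw [pdR_add (hdv.fun_mul hdv) (hdw.fun_mul hdw), pdR_mul hdv hdv, pdR_mul hdw hdw] at h1
    linarith
  -- time constraint
  have hC1 : v z x * deriv (fun t => v t x) z + w z x * deriv (fun t => w t x) z = 0 := by
    have hone := (hvt.mul hvt).add (hwt.mul hwt)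
    have hzero : HasDerivAt (fun t => v t x * v t x + w t x * w t x) 0 z := by
      refine HasDerivAt.congr_of_eventuallyEq (hasDerivAt_const z (1:ℝ)) ?_
      exact Filter.eventuallyEq_of_mem (isOpen_Ioo.mem_nhds hz) fun t ht => by
        have := hvw t (Ioo_subset_Ico_self ht) x hx; nlinarith [this]
    have := hone.unique hzero
    linarith
  have hC0 : v z x ^ 2 + w z x ^ 2 = 1 := hvw z hzI x hx
  -- sum rewrites
  have hSv : ∑ i, pdR d (ρ z) i x * pdR d (v z) i x
      = w z x * ∑ i, pdR d (ρ z) i x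
          * (w z x * pdR d (v z) i x - v z x * pdR d (w z) i x) := by
    rw [Finset.mul_sum]
    refine Finset.sum_congr rfl fun i _ => ?_
    linear_combination (-(pdR d (ρ z) i x * pdR d (v z) i x)) * hC0
      + (pdR d (ρ z) i x * v z x) * hconst i
  have hSw : ∑ i, pdR d (ρ z) i x * pdR d (w z) i x
      = -(v z x) * ∑ i, pdR d (ρ z) i x
          * (w z x * pdR d (v z) i x - v z x * pdR d (w z) i x) := by
    rw [neg_mul, Finset.mul_sum, ← Finset.sum_neg_distrib]
    refine Finset.sum_congr rfl fun i _ => ?_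
    linear_combination (-(pdR d (ρ z) i x * pdR d (w z) i x)) * hC0
      + (pdR d (ρ z) i x * w z x) * hconst i
  rw [hSv] at hLP
  rw [hSw] at hLQ
  -- the PDE at (z, x)
  have hpde' := hpde z hz x hx
  rw [hut.deriv, hlapC, habs, hdecomp z hzI x hx, hLP, hLQ] at hpde'
  have E1 := congrArg Complex.re hpde'
  have E2 := congrArg Complex.im hpde'
  simp only [Complex.add_re, Complex.add_im, Complex.mul_re, Complex.mul_im,
    Complex.I_re, Complex.I_im, Complex.ofReal_re, Complex.ofReal_im,
    Complex.zero_re, Complex.zero_im, mul_zero, zero_mul, mul_one, one_mul,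
    zero_add, add_zero, sub_zero, zero_sub, neg_zero, neg_neg] at E1 E2
  -- main scalar identities
  have hρ'val : deriv (fun t => ρ t x) z
      = κ x * (ρ z x * (w z x * lapR d (v z) x - v z x * lapR d (w z) x)
        + 2 * ∑ i, pdR d (ρ z) i x
            * (w z x * pdR d (v z) i x - v z x * pdR d (w z) i x)) := by
    linear_combination (-(w z x)) * E1 + (v z x) * E2
      + (-(deriv (fun t => ρ t x) z
          - 2 * κ x * ∑ i, pdR d (ρ z) i x
              * (w z x * pdR d (v z) i x - v z x * pdR d (w z) i x))) * hC0
      + (-(ρ z x)) * hC1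
  have hρne : ρ z x ≠ 0 := (hρpos z hzI x hx).ne'
  refine ⟨?_, ?_, ?_⟩
  · simp only [Afun]
    exact hρ'val
  · have hv'ρ : ρ z x * deriv (fun t => v t x) z
        = κ x * (-(w z x) * (lapR d (ρ z) x
            + ρ z x * (w z x * lapR d (w z) x + v z x * lapR d (v z) x)))
          - β x * ρ z x ^ 3 * w z x := by
      linear_combination E2 + (-(v z x)) * hρ'val + (κ x * ρ z x * lapR d (w z) x) * hC0
    refine mul_left_cancel₀ hρne ?_
    rw [hv'ρ]
    simp only [Bfun]
    field_simp
  · have hw'ρ : ρ z x * deriv (fun t => w t x) z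
        = κ x * (v z x * (lapR d (ρ z) x
            + ρ z x * (w z x * lapR d (w z) x + v z x * lapR d (v z) x)))
          + β x * ρ z x ^ 3 * v z x := by
      linear_combination (-1 : ℝ) * E1 + (-(w z x)) * hρ'val
        + (-(κ x * ρ z x * lapR d (v z) x)) * hC0
    refine mul_left_cancel₀ hρne ?_
    rw [hw'ρ]
    simp only [Cfun]
    field_simp
end
end

section
/- Let Ω ⊆ ℝᵈ be an open set and let ψ : Ω → ℝ be a C² function such that cos(ψ(x)) ≠ 0 for all x ∈ Ω and Δψ = −tan(ψ)|∇ψ|² on Ω. Let κ, β : Ω → ℝ with κ nowhere vanishing and β(x)/κ(x) = |∇ψ(x)|²/cos(ψ(x)) for all x ∈ Ω (equivalently, since Δψ = −tan(ψ)|∇ψ|², β/κ = −Δψ/sin(ψ) wherever sin(ψ) ≠ 0). Then the functions u₊(z,x) := e^{iψ(x)} and u₋(z,x) := e^{−iψ(x)}, which do not depend on z, are solutions of the quadratic nonlinear Schrödinger equation i ∂_z u + κ Δu + β u² = 0 on (0,∞) × Ω, and |u₊| = |u₋| = 1 everywhere; if moreover sin(ψ) is not identically zero on Ω, then the initial conditions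 u₊(0,·) and u₋(0,·) are distinct. -/
noncomputable section

open Set

lemma aux_hasFDerivAt {d : ℕ} (s : ℂ) (ψ : EuclideanSpace ℝ (Fin d) → ℝ)
    {x : EuclideanSpace ℝ (Fin d)} (hd : DifferentiableAt ℝ ψ x) :
    HasFDerivAt (fun y => Complex.exp (s * (ψ y : ℂ)))
      (Complex.exp (s * (ψ x : ℂ)) • (s • (Complex.ofRealCLM.comp (fderiv ℝ ψ x)))) x := by
  have h1 : HasFDerivAt (fun y => s * (ψ y : ℂ))
      (s • (Complex.ofRealCLM.comp (fderiv ℝ ψ x))) x := by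
    have := (Complex.ofRealCLM.hasFDerivAt.comp x hd.hasFDerivAt).const_mul s
    exact this
  exact h1.cexp

lemma pdC_exp {d : ℕ} {Ω : Set (EuclideanSpace ℝ (Fin d))} (hΩ : IsOpen Ω) (s : ℂ)
    (ψ : EuclideanSpace ℝ (Fin d) → ℝ)
    (hψ : ContDiffOn ℝ 2 ψ Ω) (i : Fin d) {x : EuclideanSpace ℝ (Fin d)} (hx : x ∈ Ω) :
    pdC d (fun y => Complex.exp (s * (ψ y : ℂ))) i x
      = Complex.exp (s * (ψ x : ℂ)) * (s * (pdR d ψ i x : ℂ)) := by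
  have hd : DifferentiableAt ℝ ψ x :=
    (hψ.contDiffAt (hΩ.mem_nhds hx)).differentiableAt (by norm_num)
  have h := aux_hasFDerivAt s ψ hd
  rw [pdC, h.fderiv]
  simp [pdR, smul_eq_mul, mul_comm]

lemma pdC2_exp {d : ℕ} {Ω : Set (EuclideanSpace ℝ (Fin d))} (hΩ : IsOpen Ω) (s : ℂ)
    (ψ : EuclideanSpace ℝ (Fin d) → ℝ)
    (hψ : ContDiffOn ℝ 2 ψ Ω) (i : Fin d) {x : EuclideanSpace ℝ (Fin d)} (hx : x ∈ Ω) :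
    pdC d (pdC d (fun y => Complex.exp (s * (ψ y : ℂ))) i) i x
      = Complex.exp (s * (ψ x : ℂ)) *
        (s * (pdR d (pdR d ψ i) i x : ℂ) + s ^ 2 * (pdR d ψ i x : ℂ) ^ 2) := by
  have hψx : ContDiffAt ℝ 2 ψ x := hψ.contDiffAt (hΩ.mem_nhds hx)
  have hd : DifferentiableAt ℝ ψ x := hψx.differentiableAt (by norm_num)
  have hf' : ContDiffAt ℝ 1 (fderiv ℝ ψ) x := hψx.fderiv_right (le_refl 2)
  have hg : DifferentiableAt ℝ (pdR d ψ i) x := by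
    have := (hf'.differentiableAt (by norm_num)).clm_apply
      (differentiableAt_const (EuclideanSpace.single i (1:ℝ)))
    exact this
  have hev : pdC d (fun y => Complex.exp (s * (ψ y : ℂ))) i
      =ᶠ[nhds x] fun y => Complex.exp (s * (ψ y : ℂ)) * (s * (pdR d ψ i y : ℂ)) := by
    filter_upwards [hΩ.mem_nhds hx] with y hy
    exact pdC_exp hΩ s ψ hψ i hy
  have hB : HasFDerivAt (fun y => s * ((pdR d ψ i y : ℝ) : ℂ))
      (s • (Complex.ofRealCLM.comp (fderiv ℝ (pdR d ψ i) x))) x := by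
    have := (Complex.ofRealCLM.hasFDerivAt.comp x hg.hasFDerivAt).const_mul s
    exact this
  have hA := aux_hasFDerivAt s ψ hd
  have hAB : HasFDerivAt (fun y => Complex.exp (s * (ψ y : ℂ)) * (s * (pdR d ψ i y : ℂ))) _ x :=
    hA.mul hB
  rw [pdC, hev.fderiv_eq, hAB.fderiv]
  have e1 : (fderiv ℝ ψ x) (EuclideanSpace.single i 1) = pdR d ψ i x := rfl
  have e2 : (fderiv ℝ (pdR d ψ i) x) (EuclideanSpace.single i 1) = pdR d (pdR d ψ i) i x := rfl
  simp [smul_eq_mul, e1, e2]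
  ring

lemma lapC_exp {d : ℕ} {Ω : Set (EuclideanSpace ℝ (Fin d))} (hΩ : IsOpen Ω) (s : ℂ)
    (ψ : EuclideanSpace ℝ (Fin d) → ℝ)
    (hψ : ContDiffOn ℝ 2 ψ Ω) {x : EuclideanSpace ℝ (Fin d)} (hx : x ∈ Ω) :
    lapC d (fun y => Complex.exp (s * (ψ y : ℂ))) x
      = Complex.exp (s * (ψ x : ℂ)) *
        (s * (lapR d ψ x : ℂ) + s ^ 2 * ((∑ i, (pdR d ψ i x) ^ 2 : ℝ) : ℂ)) := by
  rw [lapC, lapR]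
  push_cast
  rw [Finset.sum_congr rfl (fun i _ => pdC2_exp hΩ s ψ hψ i hx)]
  rw [← Finset.mul_sum]
  congr 1
  rw [Finset.mul_sum, Finset.mul_sum, ← Finset.sum_add_distrib]

lemma algebra_core (s c sn G L K B : ℂ) (hLc : L * c = -(sn * G)) (hBc : B * c = K * G)
    (hI : s ^ 2 = -1) (hc : c ≠ 0) :
    K * ((c + sn * s) * (s * L + s ^ 2 * G)) + B * (c + sn * s) ^ 2 = 0 := by
  have hL : L = -(sn*G)/c := by rw [eq_div_iff hc]; exact hLc
  have hB : B = K*G/c := by rw [eq_div_iff hc]; exact hBc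
  subst hL hB
  field_simp
  linear_combination (K*G*c + K*G*sn*s) * c * hI

lemma eqn_lemma {d : ℕ} {Ω : Set (EuclideanSpace ℝ (Fin d))} (hΩ : IsOpen Ω)
    (ψ : EuclideanSpace ℝ (Fin d) → ℝ) (hψ : ContDiffOn ℝ 2 ψ Ω)
    (hcos : ∀ x ∈ Ω, Real.cos (ψ x) ≠ 0)
    (heik : ∀ x ∈ Ω, lapR d ψ x = -Real.tan (ψ x) * (∑ i, (pdR d ψ i x) ^ 2))
    (κ β : EuclideanSpace ℝ (Fin d) → ℝ) (hκ : ∀ x ∈ Ω, κ x ≠ 0)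
    (hβκ : ∀ x ∈ Ω, β x / κ x = (∑ i, (pdR d ψ i x) ^ 2) / Real.cos (ψ x))
    (s : ℂ) (hs : s ^ 2 = -1)
    (hE : ∀ x ∈ Ω, Complex.exp (s * (ψ x : ℂ))
        = (Real.cos (ψ x) : ℂ) + (Real.sin (ψ x) : ℂ) * s)
    {x : EuclideanSpace ℝ (Fin d)} (hx : x ∈ Ω) :
    (κ x : ℂ) * lapC d (fun y => Complex.exp (s * (ψ y : ℂ))) x
      + (β x : ℂ) * (Complex.exp (s * (ψ x : ℂ))) ^ 2 = 0 := by
  have hc := hcos x hx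
  have hk := hκ x hx
  have hLcR : lapR d ψ x * Real.cos (ψ x)
      = -(Real.sin (ψ x) * (∑ i, (pdR d ψ i x) ^ 2)) := by
    have h := heik x hx
    rw [Real.tan_eq_sin_div_cos] at h
    rw [h]; field_simp
  have hBcR : β x * Real.cos (ψ x) = κ x * (∑ i, (pdR d ψ i x) ^ 2) := by
    have h := hβκ x hx
    rw [div_eq_div_iff hk hc] at h
    linarith [h]
  have hLc : (lapR d ψ x : ℂ) * (Real.cos (ψ x) : ℂ)
      = -((Real.sin (ψ x) : ℂ) * ((∑ i, (pdR d ψ i x) ^ 2 : ℝ) : ℂ)) := by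
    exact_mod_cast congrArg Complex.ofReal hLcR
  have hBc : (β x : ℂ) * (Real.cos (ψ x) : ℂ)
      = (κ x : ℂ) * ((∑ i, (pdR d ψ i x) ^ 2 : ℝ) : ℂ) := by
    exact_mod_cast congrArg Complex.ofReal hBcR
  have hc' : (Real.cos (ψ x) : ℂ) ≠ 0 := by exact_mod_cast hc
  rw [lapC_exp hΩ s ψ hψ hx, hE x hx]
  exact algebra_core s _ _ _ _ _ _ hLc hBc hs hc'

theorem QNLS_nonuniqueness_general
    (d : ℕ) (Ω : Set (EuclideanSpace ℝ (Fin d))) (hΩ : IsOpen Ω)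
    (ψ : EuclideanSpace ℝ (Fin d) → ℝ) (hψ : ContDiffOn ℝ 2 ψ Ω)
    (hcos : ∀ x ∈ Ω, Real.cos (ψ x) ≠ 0)
    (heik : ∀ x ∈ Ω, lapR d ψ x = -Real.tan (ψ x) * (∑ i, (pdR d ψ i x) ^ 2))
    (κ β : EuclideanSpace ℝ (Fin d) → ℝ) (hκ : ∀ x ∈ Ω, κ x ≠ 0)
    (hβκ : ∀ x ∈ Ω, β x / κ x = (∑ i, (pdR d ψ i x) ^ 2) / Real.cos (ψ x))
    (uplus uminus : ℝ → EuclideanSpace ℝ (Fin d) → ℂ)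
    (huplus : ∀ z : ℝ, ∀ x : EuclideanSpace ℝ (Fin d), uplus z x = Complex.exp (Complex.I * (ψ x : ℂ)))
    (huminus : ∀ z : ℝ, ∀ x : EuclideanSpace ℝ (Fin d), uminus z x = Complex.exp (-(Complex.I * (ψ x : ℂ)))) :
    (∀ z ∈ Ioi (0 : ℝ), ∀ x ∈ Ω,
      Complex.I * deriv (fun t => uplus t x) z + (κ x : ℂ) * lapC d (uplus z) x
        + (β x : ℂ) * (uplus z x) ^ 2 = 0) ∧
    (∀ z ∈ Ioi (0 : ℝ), ∀ x ∈ Ω,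
      Complex.I * deriv (fun t => uminus t x) z + (κ x : ℂ) * lapC d (uminus z) x
        + (β x : ℂ) * (uminus z x) ^ 2 = 0) ∧
    (∀ z : ℝ, ∀ x : EuclideanSpace ℝ (Fin d), ‖uplus z x‖ = 1 ∧ ‖uminus z x‖ = 1) ∧
    ((∃ x ∈ Ω, Real.sin (ψ x) ≠ 0) → ∃ x ∈ Ω, uplus 0 x ≠ uminus 0 x) := by
  have hEp : ∀ y : EuclideanSpace ℝ (Fin d), Complex.exp (Complex.I * (ψ y : ℂ))
      = (Real.cos (ψ y) : ℂ) + (Real.sin (ψ y) : ℂ) * Complex.I := by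
    intro y
    rw [mul_comm, Complex.exp_mul_I]
    simp [Complex.ofReal_cos, Complex.ofReal_sin]
  have hEm : ∀ y : EuclideanSpace ℝ (Fin d), Complex.exp (-Complex.I * (ψ y : ℂ))
      = (Real.cos (ψ y) : ℂ) + (Real.sin (ψ y) : ℂ) * -Complex.I := by
    intro y
    have : -Complex.I * (ψ y : ℂ) = ((-(ψ y) : ℝ) : ℂ) * Complex.I := by push_cast; ring
    rw [this, Complex.exp_mul_I]
    simp [Complex.ofReal_cos, Complex.ofReal_sin]
  have hupfun : ∀ z : ℝ, uplus z = fun y => Complex.exp (Complex.I * (ψ y : ℂ)) := by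
    intro z; funext y; exact huplus z y
  have humfun : ∀ z : ℝ, uminus z = fun y => Complex.exp (-Complex.I * (ψ y : ℂ)) := by
    intro z; funext y; rw [huminus z y, neg_mul]
  refine ⟨?_, ?_, ?_, ?_⟩
  · intro z _ x hx
    have hder : deriv (fun t => uplus t x) z = 0 := by
      have : (fun t : ℝ => uplus t x) = fun _ => Complex.exp (Complex.I * (ψ x : ℂ)) :=
        funext fun t => huplus t x
      rw [this, deriv_const]
    rw [hder, hupfun z]
    linear_combination eqn_lemma hΩ ψ hψ hcos heik κ β hκ hβκ Complex.I (by simp [Complex.I_sq])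
      (fun y _ => hEp y) hx
  · intro z _ x hx
    have hder : deriv (fun t => uminus t x) z = 0 := by
      have : (fun t : ℝ => uminus t x) = fun _ => Complex.exp (-(Complex.I * (ψ x : ℂ))) :=
        funext fun t => huminus t x
      rw [this, deriv_const]
    rw [hder, humfun z]
    linear_combination eqn_lemma hΩ ψ hψ hcos heik κ β hκ hβκ (-Complex.I) (by simp [Complex.I_sq])
      (fun y _ => hEm y) hx
  · intro z x
    constructor
    · rw [huplus z x]; simp [Complex.norm_exp]
    · rw [huminus z x]; simp [Complex.norm_exp]
  · rintro ⟨x, hx, hsin⟩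
    refine ⟨x, hx, ?_⟩
    intro heq
    rw [huplus 0 x, huminus 0 x, ← neg_mul, hEp x, hEm x] at heq
    have h2 : (Real.sin (ψ x) : ℂ) = 0 := by
      have h3 : (Real.sin (ψ x) : ℂ) * (2 * Complex.I) = 0 := by linear_combination heq
      rcases mul_eq_zero.1 h3 with h | h
      · exact h
      · simp [Complex.I_ne_zero] at h
    exact hsin (by exact_mod_cast h2)
end
end

section
/- Let β : [0,∞) → ℝ be continuous and let k₁, k₂ ∈ ℝ² be two distinct vectors. For j = 1,2 define u_j(z,x) := exp(i[k_j · x − |k_j|² z + ∫₀^z β(s) ds]) for (z,x) ∈ [0,∞) × ℝ². Then each u_j solves the Gross–Pitaevskii equation i ∂_z u + Δu + β(z)|u|²u = 0 on (0,∞) × ℝ²; |u₁(z,x)| = |u₂(z,x)| = 1 for all (z,x); and there is no constant φ ∈ ℝ such that u₁(0,x) = u₂(0,x) e^{iφ} for all x ∈ ℝ², i.e., the initial conditions e^{ik₁·x} and e^{ik₂·x} belong to different equivalence classes under constant phase shifts. -/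
noncomputable section

open Set

open scoped RealInnerProductSpace

abbrev E2 := EuclideanSpace ℝ (Fin 2)

lemma phase_hasFDerivAt (k : E2) (c : ℝ) (x : E2) :
    HasFDerivAt (fun y : E2 => Complex.exp (Complex.I * ((⟪k, y⟫ + c : ℝ) : ℂ)))
      ((Complex.exp (Complex.I * ((⟪k, x⟫ + c : ℝ) : ℂ)) * Complex.I) •
        (Complex.ofRealCLM.comp (innerSL ℝ k))) x := by
  have h1 : HasFDerivAt (fun y : E2 => (⟪k, y⟫ : ℝ)) (innerSL ℝ k) x :=
    (innerSL ℝ k).hasFDerivAt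
  have h2 : HasFDerivAt (fun y : E2 => ((⟪k, y⟫ : ℝ) : ℂ))
      (Complex.ofRealCLM.comp (innerSL ℝ k)) x :=
    Complex.ofRealCLM.hasFDerivAt.comp x h1
  have h3 := ((h2.add_const (c : ℂ)).const_mul Complex.I).cexp
  have : (fun y : E2 => Complex.exp (Complex.I * (((⟪k, y⟫ : ℝ) : ℂ) + (c : ℂ))))
      = fun y : E2 => Complex.exp (Complex.I * ((⟪k, y⟫ + c : ℝ) : ℂ)) := by
    funext y; push_cast; ring_nf
  rw [this] at h3
  convert h3 using 1
  · rfl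
  push_cast
  rw [smul_smul]

lemma pdC_phase (k : E2) (c : ℝ) (i : Fin 2) (x : E2) :
    pdC 2 (fun y => Complex.exp (Complex.I * ((⟪k, y⟫ + c : ℝ) : ℂ))) i x
      = (Complex.I * (k i : ℂ)) * Complex.exp (Complex.I * ((⟪k, x⟫ + c : ℝ) : ℂ)) := by
  unfold pdC
  rw [(phase_hasFDerivAt k c x).fderiv]
  simp only [ContinuousLinearMap.smul_apply, ContinuousLinearMap.coe_comp', Function.comp_apply,
    innerSL_apply_apply, Complex.ofRealCLM_apply, smul_eq_mul, EuclideanSpace.inner_single_right,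
    starRingEnd_apply, star_trivial, one_mul]
  ring

lemma pdC_pdC_phase (k : E2) (c : ℝ) (i : Fin 2) (x : E2) :
    pdC 2 (pdC 2 (fun y => Complex.exp (Complex.I * ((⟪k, y⟫ + c : ℝ) : ℂ))) i) i x
      = -(k i : ℂ)^2 * Complex.exp (Complex.I * ((⟪k, x⟫ + c : ℝ) : ℂ)) := by
  have h : pdC 2 (fun y => Complex.exp (Complex.I * ((⟪k, y⟫ + c : ℝ) : ℂ))) i
      = fun y => (Complex.I * (k i : ℂ)) * Complex.exp (Complex.I * ((⟪k, y⟫ + c : ℝ) : ℂ)) :=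
    funext fun y => pdC_phase k c i y
  rw [h]
  unfold pdC
  rw [((phase_hasFDerivAt k c x).const_mul (Complex.I * (k i : ℂ))).fderiv]
  simp only [ContinuousLinearMap.smul_apply, ContinuousLinearMap.coe_comp', Function.comp_apply,
    innerSL_apply_apply, Complex.ofRealCLM_apply, smul_eq_mul, EuclideanSpace.inner_single_right,
    starRingEnd_apply, star_trivial, one_mul]
  rw [show Complex.I * (k i : ℂ) * (Complex.exp (Complex.I * ((⟪k, x⟫ + c : ℝ) : ℂ)) * Complex.I * (k i : ℂ))
    = (Complex.I*Complex.I) * ((k i:ℂ)^2 * Complex.exp (Complex.I * ((⟪k, x⟫ + c : ℝ) : ℂ))) by ring,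
    Complex.I_mul_I]
  ring

lemma norm_sq_eq (k : E2) : ‖k‖^2 = ∑ i, (k i)^2 := by
  rw [EuclideanSpace.norm_eq, Real.sq_sqrt (by positivity)]
  simp [sq_abs]

lemma lapC_phase (k : E2) (c : ℝ) (x : E2) :
    lapC 2 (fun y => Complex.exp (Complex.I * ((⟪k, y⟫ + c : ℝ) : ℂ))) x
      = -((‖k‖^2 : ℝ) : ℂ) * Complex.exp (Complex.I * ((⟪k, x⟫ + c : ℝ) : ℂ)) := by
  unfold lapC
  rw [Finset.sum_congr rfl fun i _ => pdC_pdC_phase k c i x]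
  rw [← Finset.sum_mul, norm_sq_eq]
  push_cast
  simp [Finset.sum_neg_distrib]

lemma deriv_phase (β : ℝ → ℝ) (hβ : ContinuousOn β (Ici 0)) (a b : ℝ) {z : ℝ} (hz : 0 < z) :
    HasDerivAt (fun t : ℝ => Complex.exp (Complex.I * ((a - b * t + ∫ s in (0:ℝ)..t, β s : ℝ) : ℂ)))
      (Complex.I * (((β z - b : ℝ)) : ℂ) *
        Complex.exp (Complex.I * ((a - b * z + ∫ s in (0:ℝ)..z, β s : ℝ) : ℂ))) z := by
  have hint : IntervalIntegrable β MeasureTheory.volume 0 z :=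
    (hβ.mono (by rw [uIcc_of_le hz.le]; exact Icc_subset_Ici_self)).intervalIntegrable
  have hmeas : StronglyMeasurableAtFilter β (nhds z) MeasureTheory.volume :=
    (hβ.mono Ioi_subset_Ici_self).stronglyMeasurableAtFilter isOpen_Ioi z hz
  have hct : ContinuousAt β z := hβ.continuousAt (Ici_mem_nhds hz)
  have hInt : HasDerivAt (fun t => ∫ s in (0:ℝ)..t, β s) (β z) z :=
    intervalIntegral.integral_hasDerivAt_right hint hmeas hct
  have h1 : HasDerivAt (fun t : ℝ => a - b * t + ∫ s in (0:ℝ)..t, β s) (β z - b) z := by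
    have h := ((hasDerivAt_const z a).sub ((hasDerivAt_id z).const_mul b)).add hInt
    convert h using 1
    · rfl
    · rfl
    · rfl
    ring
  have h2 := (h1.ofReal_comp.const_mul Complex.I).cexp
  convert h2 using 1
  ring

lemma abs_phase (r : ℝ) : ‖Complex.exp (Complex.I * (r : ℂ))‖ = 1 := by
  rw [Complex.norm_exp]
  simp

lemma master (β : ℝ → ℝ) (hβ : ContinuousOn β (Ici 0)) (k : E2) (u : ℝ → E2 → ℂ)
    (hu : ∀ z : ℝ, ∀ x : E2,
      u z x = Complex.exp (Complex.I *
        ((⟪k, x⟫ - ‖k‖ ^ 2 * z + ∫ s in (0 : ℝ)..z, β s : ℝ) : ℂ))) :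
    (∀ z ∈ Ioi (0 : ℝ), ∀ x : E2,
      Complex.I * deriv (fun t => u t x) z + lapC 2 (u z) x
        + (β z : ℂ) * ((‖u z x‖ : ℂ)) ^ 2 * u z x = 0) ∧
    (∀ z : ℝ, ∀ x : E2, ‖u z x‖ = 1) := by
  constructor
  · intro z hz x
    rw [Set.mem_Ioi] at hz
    set c := -‖k‖ ^ 2 * z + ∫ s in (0:ℝ)..z, β s with hc
    have key : ∀ y : E2, (⟪k, y⟫ - ‖k‖ ^ 2 * z + ∫ s in (0:ℝ)..z, β s) = ⟪k, y⟫ + c :=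
      fun y => by rw [hc]; ring
    have hcz : u z = fun y => Complex.exp (Complex.I * ((⟪k, y⟫ + c : ℝ) : ℂ)) :=
      funext fun y => by rw [hu, key]
    have huzx : u z x = Complex.exp (Complex.I * ((⟪k, x⟫ + c : ℝ) : ℂ)) := by
      rw [hcz]
    have habs : ‖u z x‖ = 1 := by rw [huzx]; exact abs_phase _
    have hfun : (fun t => u t x)
        = fun t => Complex.exp (Complex.I * ((⟪k, x⟫ - ‖k‖ ^ 2 * t + ∫ s in (0:ℝ)..t, β s : ℝ) : ℂ)) :=
      funext fun t => hu t x
    have hderiv : deriv (fun t => u t x) z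
        = Complex.I * ((β z - ‖k‖ ^ 2 : ℝ) : ℂ) * Complex.exp (Complex.I * ((⟪k, x⟫ + c : ℝ) : ℂ)) := by
      rw [hfun, (deriv_phase β hβ ⟪k, x⟫ (‖k‖ ^ 2) hz).deriv, key x]
    rw [hderiv, habs, huzx, hcz, lapC_phase]
    push_cast
    set E := Complex.exp (Complex.I * (((⟪k, x⟫ : ℝ) : ℂ) + (c : ℂ)))
    linear_combination (((β z : ℝ) : ℂ) - ((‖k‖ : ℝ) : ℂ) ^ 2) * E * Complex.I_mul_I
  · intro z x
    rw [hu]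
    exact abs_phase _

lemma no_phase (k₁ k₂ : E2) (hk : k₁ ≠ k₂) :
    ¬ ∃ φ : ℝ, ∀ x : E2,
      Complex.exp (Complex.I * ((⟪k₁, x⟫ : ℝ) : ℂ))
        = Complex.exp (Complex.I * ((⟪k₂, x⟫ : ℝ) : ℂ)) * Complex.exp (Complex.I * (φ : ℂ)) := by
  rintro ⟨φ, h⟩
  have hφ : Complex.exp (Complex.I * (φ : ℂ)) = 1 := by
    have h0 := h 0
    simp [inner_zero_right] at h0
    exact h0.symm
  set d := k₁ - k₂ with hd
  have hdne : d ≠ 0 := sub_ne_zero.mpr hk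
  have hnorm : ‖d‖ ≠ 0 := norm_ne_zero_iff.mpr hdne
  set x : E2 := (Real.pi / ‖d‖ ^ 2) • d with hx
  have hab : (⟪k₁, x⟫ : ℝ) - ⟪k₂, x⟫ = Real.pi := by
    rw [← inner_sub_left, ← hd, hx, real_inner_smul_right, real_inner_self_eq_norm_sq]
    field_simp
  have hxx := h x
  rw [hφ, mul_one] at hxx
  have h1 : Complex.exp (Complex.I * ((⟪k₁, x⟫ : ℝ) : ℂ) - Complex.I * ((⟪k₂, x⟫ : ℝ) : ℂ)) = 1 := by
    rw [Complex.exp_sub, hxx, div_self (Complex.exp_ne_zero _)]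
  have h2 : Complex.I * ((⟪k₁, x⟫ : ℝ) : ℂ) - Complex.I * ((⟪k₂, x⟫ : ℝ) : ℂ)
      = (Real.pi : ℂ) * Complex.I := by
    have : ((⟪k₁, x⟫ - ⟪k₂, x⟫ : ℝ) : ℂ) = (Real.pi : ℂ) := by rw [hab]
    push_cast at this ⊢
    linear_combination Complex.I * this
  rw [h2, Complex.exp_pi_mul_I] at h1
  norm_num at h1

theorem GP_plane_wave_nonuniqueness
    (β : ℝ → ℝ) (hβ : ContinuousOn β (Ici 0))
    (k₁ k₂ : EuclideanSpace ℝ (Fin 2)) (hk : k₁ ≠ k₂)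
    (u₁ u₂ : ℝ → EuclideanSpace ℝ (Fin 2) → ℂ)
    (hu₁ : ∀ z : ℝ, ∀ x : EuclideanSpace ℝ (Fin 2),
      u₁ z x = Complex.exp (Complex.I *
        ((⟪k₁, x⟫ - ‖k₁‖ ^ 2 * z + ∫ s in (0 : ℝ)..z, β s : ℝ) : ℂ)))
    (hu₂ : ∀ z : ℝ, ∀ x : EuclideanSpace ℝ (Fin 2),
      u₂ z x = Complex.exp (Complex.I *
        ((⟪k₂, x⟫ - ‖k₂‖ ^ 2 * z + ∫ s in (0 : ℝ)..z, β s : ℝ) : ℂ))) :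
    (∀ z ∈ Ioi (0 : ℝ), ∀ x : EuclideanSpace ℝ (Fin 2),
      Complex.I * deriv (fun t => u₁ t x) z + lapC 2 (u₁ z) x
        + (β z : ℂ) * ((‖u₁ z x‖ : ℂ)) ^ 2 * u₁ z x = 0) ∧
    (∀ z ∈ Ioi (0 : ℝ), ∀ x : EuclideanSpace ℝ (Fin 2),
      Complex.I * deriv (fun t => u₂ t x) z + lapC 2 (u₂ z) x
        + (β z : ℂ) * ((‖u₂ z x‖ : ℂ)) ^ 2 * u₂ z x = 0) ∧
    (∀ z : ℝ, ∀ x : EuclideanSpace ℝ (Fin 2), ‖u₁ z x‖ = 1 ∧ ‖u₂ z x‖ = 1) ∧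
    ¬ ∃ φ : ℝ, ∀ x : EuclideanSpace ℝ (Fin 2), u₁ 0 x = u₂ 0 x * Complex.exp (Complex.I * (φ : ℂ)) := by
  obtain ⟨h1pde, h1abs⟩ := master β hβ k₁ u₁ hu₁
  obtain ⟨h2pde, h2abs⟩ := master β hβ k₂ u₂ hu₂
  refine ⟨h1pde, h2pde, fun z x => ⟨h1abs z x, h2abs z x⟩, ?_⟩
  rintro ⟨φ, h⟩
  apply no_phase k₁ k₂ hk
  refine ⟨φ, fun x => ?_⟩
  have hx := h x
  rw [hu₁, hu₂] at hx
  simpa using hx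
end
end
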